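/- Let ρ be a symmetric operator on an n-dimensional real inner product space (n ≥ 3) with trace S, and k = 2(n−1)²/(2n−3). Then the first Newton transformation of Ein_k = S·id − k·ρ satisfies t₁(Ein_k) = k(n−2)·A, where A = (1/(n−2))·(ρ − (S/(2(n−1)))·id) is the Schouten operator. Consequently, if Ein_k is positive definite then A is positive definite. -/

import Mathlib

open RealInnerProductSpace

lemma trace_eq_sum_inner' {E : Type*} [NormedAddCommGroup E] [InnerProductSpace ℝ E]
    [FiniteDimensional ℝ E] {ι : Type*} [Fintype ι] [DecidableEq ι]
    (b : OrthonormalBasis ι ℝ E) (T : E →ₗ[ℝ] E) :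
    LinearMap.trace ℝ E T = ∑ i, ⟪T (b i), b i⟫ := by
  rw [LinearMap.trace_eq_matrix_trace ℝ b.toBasis T, Matrix.trace]
  congr 1
  ext i
  rw [Matrix.diag_apply, LinearMap.toMatrix_apply, OrthonormalBasis.coe_toBasis,
    OrthonormalBasis.coe_toBasis_repr_apply, OrthonormalBasis.repr_apply_apply,
    real_inner_comm]

/-- For `n ≥ 3` and `k = 2(n-1)²/(2n-3)`, the first Newton
transformation of `Ein_k = S•id - k•ρ` equals `k(n-2)•A` where `A` is the Schouten
operator; consequently `Ein_k` positive definite implies `A` positive definite. -/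
theorem stmt_12 {E : Type*} [NormedAddCommGroup E] [InnerProductSpace ℝ E]
    [FiniteDimensional ℝ E] {n : ℕ} (hn : Module.finrank ℝ E = n) (hn3 : 3 ≤ n)
    (ρ : E →ₗ[ℝ] E) (hρ : ρ.IsSymmetric) (S : ℝ) (hS : S = LinearMap.trace ℝ E ρ)
    (k : ℝ) (hk : k = 2 * ((n : ℝ) - 1) ^ 2 / (2 * n - 3))
    (A Eink : E →ₗ[ℝ] E)
    (hA : A = (((n : ℝ) - 2)⁻¹) •
      (ρ - (S / (2 * ((n : ℝ) - 1))) • (LinearMap.id : E →ₗ[ℝ] E)))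
    (hEink : Eink = S • (LinearMap.id : E →ₗ[ℝ] E) - k • ρ) :
    ((LinearMap.trace ℝ E Eink) • (LinearMap.id : E →ₗ[ℝ] E) - Eink =
      (k * ((n : ℝ) - 2)) • A) ∧
    ((∀ v : E, v ≠ 0 → 0 < ⟪Eink v, v⟫) → ∀ v : E, v ≠ 0 → 0 < ⟪A v, v⟫) := by
  have hn' : (3 : ℝ) ≤ (n : ℝ) := by exact_mod_cast hn3
  have hn1 : ((n : ℝ) - 1) ≠ 0 := by linarith
  have hn2 : ((n : ℝ) - 2) ≠ 0 := by linarith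
  have h2n3 : (2 * (n : ℝ) - 3) ≠ 0 := by linarith
  have hkpos : 0 < k := by
    rw [hk]
    apply div_pos
    · positivity
    · linarith
  have htr : LinearMap.trace ℝ E Eink = ((n : ℝ) - k) * S := by
    rw [hEink, map_sub, map_smul, map_smul, LinearMap.trace_id, hn, ← hS]
    simp; ring
  have key : ((n : ℝ) - k) * S - S = -(k * (S / (2 * ((n : ℝ) - 1)))) := by
    have e1 : k * (2 * (n : ℝ) - 3) = 2 * ((n : ℝ) - 1) ^ 2 := by
      rw [hk]; exact div_mul_cancel₀ _ h2n3
    have e2 : S / (2 * ((n : ℝ) - 1)) * (2 * ((n : ℝ) - 1)) = S :=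
      div_mul_cancel₀ S (mul_ne_zero two_ne_zero hn1)
    linear_combination (-((n : ℝ) - 1 - k)) * e2 - (S / (2 * ((n : ℝ) - 1))) * e1
  have h1 : (LinearMap.trace ℝ E Eink) • (LinearMap.id : E →ₗ[ℝ] E) - Eink =
      (k * ((n : ℝ) - 2)) • A := by
    rw [htr, hEink, hA, smul_smul]
    have : k * ((n : ℝ) - 2) * ((n : ℝ) - 2)⁻¹ = k := by field_simp
    rw [this]
    ext v
    simp only [LinearMap.sub_apply, LinearMap.smul_apply, LinearMap.id_apply]
    have h2 : (((n : ℝ) - k) * S) • v - (S • v - k • ρ v)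
        = (((n : ℝ) - k) * S - S) • v + k • ρ v := by module
    rw [h2, key]
    module
  refine ⟨h1, fun hpos v hv => ?_⟩
  -- reduce to the Newton transform
  have hAv : ⟪A v, v⟫ = (k * ((n : ℝ) - 2))⁻¹ *
      ⟪((LinearMap.trace ℝ E Eink) • (LinearMap.id : E →ₗ[ℝ] E) - Eink) v, v⟫ := by
    rw [h1]
    simp only [LinearMap.smul_apply, inner_smul_left, RCLike.conj_to_real]
    rw [← mul_assoc, inv_mul_cancel₀ (by positivity), one_mul]
  rw [hAv]
  apply mul_pos (inv_pos.mpr (mul_pos hkpos (by linarith)))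
  -- normalize v
  set u : E := ‖v‖⁻¹ • v with hu
  have hvnorm : ‖v‖ ≠ 0 := norm_ne_zero_iff.mpr hv
  have hunorm : ‖u‖ = 1 := by
    rw [hu, norm_smul, norm_inv, norm_norm, inv_mul_cancel₀ hvnorm]
  -- orthonormal basis extending u
  haveI : NeZero n := ⟨by omega⟩
  have hcard : Module.finrank ℝ E = Fintype.card (Fin n) := by simp [hn]
  have horth : Orthonormal ℝ (({0} : Set (Fin n)).restrict (fun _ => u)) := by
    constructor
    · intro i; exact hunorm
    · intro i j hij
      exact absurd (Subtype.ext (by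
        have hi := i.2; have hj := j.2
        simp only [Set.mem_singleton_iff] at hi hj
        rw [hi, hj])) hij
  obtain ⟨b, hb⟩ := horth.exists_orthonormalBasis_extension_of_card_eq hcard
  have hb0 : b 0 = u := hb 0 rfl
  -- trace minus Rayleigh quotient at u
  have hsum : LinearMap.trace ℝ E Eink - ⟪Eink u, u⟫
      = ∑ i ∈ Finset.univ.erase 0, ⟪Eink (b i), b i⟫ := by
    rw [trace_eq_sum_inner' b Eink, ← hb0,
      ← Finset.add_sum_erase _ _ (Finset.mem_univ 0)]
    ring
  have hposu : 0 < LinearMap.trace ℝ E Eink - ⟪Eink u, u⟫ := by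
    rw [hsum]
    apply Finset.sum_pos
    · intro i _
      apply hpos
      intro h0
      have := b.orthonormal.1 i
      rw [h0] at this; simp at this
    · refine ⟨⟨1, by omega⟩, Finset.mem_erase.mpr ⟨?_, Finset.mem_univ _⟩⟩
      exact Fin.ne_of_val_ne (by simp)
  -- transfer back to v
  have hEv : ⟪Eink v, v⟫ = ‖v‖ ^ 2 * ⟪Eink u, u⟫ := by
    rw [hu, map_smul, inner_smul_left, inner_smul_right, RCLike.conj_to_real]
    field_simp
  simp only [LinearMap.sub_apply, LinearMap.smul_apply, LinearMap.id_apply,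
    inner_sub_left, inner_smul_left, RCLike.conj_to_real, real_inner_self_eq_norm_sq]
  rw [hEv]
  have : LinearMap.trace ℝ E Eink * ‖v‖ ^ 2 - ‖v‖ ^ 2 * ⟪Eink u, u⟫
      = ‖v‖ ^ 2 * (LinearMap.trace ℝ E Eink - ⟪Eink u, u⟫) := by ring
  rw [this]
  positivity
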